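/- Let (Q₋₁ ⊆ P₋₁ ⊆ P₀, Q₋₁ ⊆ Q₀ ⊆ P₀, τ) be a commuting square, and let p₁, p₂ ∈ Q₋₁' ∩ P₋₁ be orthogonal projections and q₁, q₂ ∈ Q₋₁' ∩ Q₀ be orthogonal projections with [p₁,q₁] = [p₂,q₂]. For λ ∈ ℂ with |λ| = 1 set U(λ) = I + (λ−1)p₁q₁ + (λ̄−1)p₂q₂. Then for all p ∈ P₋₁ with E_{Q₋₁}(p) = 0 and all q ∈ Q₀, one has τ(p · U(λ) q U(λ)*) = 0; i.e., (Q₋₁ ⊆ P₋₁ ⊆ P₀, Q₋₁ ⊆ U(λ)* Q₀ U(λ) ⊆ P₀, τ) is a commuting square for every λ. -/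

import Mathlib

open Matrix

/-- `E` is the `τ`-preserving conditional expectation of `Mₙ(ℂ)` onto the unital
*-subalgebra `B`. -/
def IsCondExp {n : ℕ} (τ : Matrix (Fin n) (Fin n) ℂ →ₗ[ℂ] ℂ)
    (B : StarSubalgebra ℂ (Matrix (Fin n) (Fin n) ℂ))
    (E : Matrix (Fin n) (Fin n) ℂ →ₗ[ℂ] Matrix (Fin n) (Fin n) ℂ) : Prop :=
  (∀ x, E x ∈ B) ∧ (∀ b ∈ B, E b = b) ∧ ∀ x, ∀ b ∈ B, τ (bᴴ * (x - E x)) = 0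

/-- Given a commuting square `(Q₋₁ ⊆ P₋₁ ⊆ P₀, Q₋₁ ⊆ Q₀ ⊆ P₀, τ)` in `P₀ = Mₙ(ℂ)`,
orthogonal projections `p₁, p₂ ∈ Q₋₁' ∩ P₋₁` and `q₁, q₂ ∈ Q₋₁' ∩ Q₀` with
`[p₁,q₁] = [p₂,q₂]`, and `|λ| = 1`, set `U(λ) = I + (λ−1)p₁q₁ + (conj λ −1)p₂q₂`. Then
`τ(p·U(λ)·q·U(λ)*) = 0` for all `p ∈ P₋₁` with `E_{Q₋₁}(p) = 0` and all `q ∈ Q₀`; i.e.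
`(Q₋₁ ⊆ P₋₁ ⊆ P₀, Q₋₁ ⊆ U(λ)* Q₀ U(λ) ⊆ P₀, τ)` is a commuting square for every `λ`. -/
theorem petrescu_deformation_commuting_square {n : ℕ}
    (τ : Matrix (Fin n) (Fin n) ℂ →ₗ[ℂ] ℂ)
    (htr : ∀ x y, τ (x * y) = τ (y * x)) (hτ1 : τ 1 = 1)
    (hfaith : ∀ x, τ (xᴴ * x) = 0 → x = 0)
    (Qm Pm Q0 : StarSubalgebra ℂ (Matrix (Fin n) (Fin n) ℂ))
    (hQP : Qm ≤ Pm) (hQQ : Qm ≤ Q0)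
    (EPm EQ0 EQm : Matrix (Fin n) (Fin n) ℂ →ₗ[ℂ] Matrix (Fin n) (Fin n) ℂ)
    (hEP : IsCondExp τ Pm EPm) (hEQ0 : IsCondExp τ Q0 EQ0) (hEQm : IsCondExp τ Qm EQm)
    (hcs : ∀ x, EPm (EQ0 x) = EQm x)
    (p₁ p₂ q₁ q₂ : Matrix (Fin n) (Fin n) ℂ)
    (hp₁P : p₁ ∈ Pm) (hp₂P : p₂ ∈ Pm)
    (hp₁c : ∀ y ∈ Qm, p₁ * y = y * p₁) (hp₂c : ∀ y ∈ Qm, p₂ * y = y * p₂)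
    (hq₁Q : q₁ ∈ Q0) (hq₂Q : q₂ ∈ Q0)
    (hq₁c : ∀ y ∈ Qm, q₁ * y = y * q₁) (hq₂c : ∀ y ∈ Qm, q₂ * y = y * q₂)
    (hp₁ : p₁ * p₁ = p₁) (hp₁s : p₁ᴴ = p₁) (hp₂ : p₂ * p₂ = p₂) (hp₂s : p₂ᴴ = p₂)
    (hporth : p₁ * p₂ = 0)
    (hq₁ : q₁ * q₁ = q₁) (hq₁s : q₁ᴴ = q₁) (hq₂ : q₂ * q₂ = q₂) (hq₂s : q₂ᴴ = q₂)
    (hqorth : q₁ * q₂ = 0)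
    (hcomm : p₁ * q₁ - q₁ * p₁ = p₂ * q₂ - q₂ * p₂)
    (lam : ℂ) (hlam : ‖lam‖ = 1) :
    ∀ p ∈ Pm, EQm p = 0 → ∀ q ∈ Q0,
      τ (p * ((1 + (lam - 1) • (p₁ * q₁) + ((starRingEnd ℂ) lam - 1) • (p₂ * q₂)) * q *
          (1 + (lam - 1) • (p₁ * q₁) + ((starRingEnd ℂ) lam - 1) • (p₂ * q₂))ᴴ)) = 0 := by
  intro p hp hEp q hq
  obtain ⟨hEQm_mem, hEQm_fix, hEQm_orth⟩ := hEQm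
  obtain ⟨hEP_mem, hEP_fix, hEP_orth⟩ := hEP
  obtain ⟨hEQ0_mem, hEQ0_fix, hEQ0_orth⟩ := hEQ0
  -- τ(d * x) = τ(d * EQm x) for d ∈ Qm
  have htau_d : ∀ d ∈ Qm, ∀ x, τ (d * x) = τ (d * EQm x) := by
    intro d hd x
    have h := hEQm_orth x dᴴ (star_mem hd)
    rw [conjTranspose_conjTranspose, mul_sub, map_sub, sub_eq_zero] at h
    exact h
  have htau_P : ∀ y ∈ Pm, ∀ x, τ (y * x) = τ (y * EPm x) := by
    intro y hy x
    have h := hEP_orth x yᴴ (star_mem hy)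
    rw [conjTranspose_conjTranspose, mul_sub, map_sub, sub_eq_zero] at h
    exact h
  have key : ∀ y ∈ Pm, ∀ x ∈ Q0, τ (y * x) = τ (y * EQm x) := by
    intro y hy x hx
    have hPx : EPm x = EQm x := (congrArg EPm (hEQ0_fix x hx)).symm.trans (hcs x)
    rw [htau_P y hy x, hPx]
  -- τ(p * d) = 0 for d ∈ Qm
  have zero1 : ∀ d, τ (p * EQm d) = 0 := by
    intro d
    rw [htr, htau_d _ (hEQm_mem d), hEp, mul_zero, map_zero]
  -- EQm (w * z) = EQm (z * w) when w commutes with Qm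
  have Eswap : ∀ w, (∀ y ∈ Qm, w * y = y * w) → ∀ z, EQm (w * z) = EQm (z * w) := by
    intro w hw z
    have he : EQm (w * z) - EQm (z * w) ∈ Qm :=
      sub_mem (hEQm_mem _) (hEQm_mem _)
    have hz : τ ((EQm (w * z) - EQm (z * w))ᴴ * (EQm (w * z) - EQm (z * w))) = 0 := by
      set e := EQm (w * z) - EQm (z * w) with hedef
      have heQ : eᴴ ∈ Qm := star_mem he
      have h1 : τ (eᴴ * EQm (w * z)) = τ (eᴴ * (w * z)) := (htau_d _ heQ _).symm
      have h2 : τ (eᴴ * EQm (z * w)) = τ (eᴴ * (z * w)) := (htau_d _ heQ _).symm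
      have h3 : τ (eᴴ * (w * z)) = τ (eᴴ * (z * w)) := by
        calc τ (eᴴ * (w * z)) = τ ((w * eᴴ) * z) := by rw [hw _ heQ, mul_assoc]
          _ = τ (z * (w * eᴴ)) := htr _ _
          _ = τ ((z * w) * eᴴ) := by rw [mul_assoc]
          _ = τ (eᴴ * (z * w)) := htr _ _
      rw [mul_sub, map_sub, h1, h2, h3, sub_self]
    have := hfaith _ hz
    exact sub_eq_zero.mp this
  have hporth2 : p₂ * p₁ = 0 := by
    have := congrArg conjTranspose hporth
    simpa [conjTranspose_mul, hp₁s, hp₂s] using this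
  have hqorth2 : q₂ * q₁ = 0 := by
    have := congrArg conjTranspose hqorth
    simpa [conjTranspose_mul, hq₁s, hq₂s] using this
  -- generic term computations for (p', q') ∈ {(p₁,q₁), (p₂,q₂)}
  have main : ∀ p' q', p' ∈ Pm → q' ∈ Q0 → (∀ y ∈ Qm, p' * y = y * p') →
      (∀ y ∈ Qm, q' * y = y * q') → p' * p' = p' → q' * q' = q' →
      τ (p * (p' * q' * q)) = τ (p' * p * EQm (q' * q)) ∧
      τ (p * (q * (q' * p'))) = τ (p' * p * EQm (q' * q)) ∧
      τ (p * (p' * q' * q * (q' * p'))) = τ (p' * p * EQm (q' * q)) := by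
    intro p' q' hp' hq' hp'c hq'c hp'i hq'i
    have hc : EQm (q' * q) ∈ Qm := hEQm_mem _
    have hcp' : p' * EQm (q' * q) = EQm (q' * q) * p' := hp'c _ hc
    set c := EQm (q' * q) with hcdef
    have hswap : EQm (q * q') = c := (Eswap q' hq'c q).symm
    refine ⟨?_, ?_, ?_⟩
    · calc τ (p * (p' * q' * q)) = τ ((p * p') * (q' * q)) := by simp only [mul_assoc]
        _ = τ ((p * p') * c) := key _ (mul_mem hp hp') _ (mul_mem hq' hq)
        _ = τ ((p * c) * p') := by rw [mul_assoc, hcp', ← mul_assoc]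
        _ = τ (p' * (p * c)) := htr _ _
        _ = τ (p' * p * c) := by simp only [mul_assoc]
    · calc τ (p * (q * (q' * p'))) = τ ((p * (q * q')) * p') := by simp only [mul_assoc]
        _ = τ (p' * (p * (q * q'))) := htr _ _
        _ = τ ((p' * p) * (q * q')) := by simp only [mul_assoc]
        _ = τ ((p' * p) * EQm (q * q')) :=
            key _ (mul_mem hp' hp) _ (mul_mem hq hq')
        _ = τ (p' * p * c) := by rw [hswap]
    · have hx : EQm (q' * (q * q')) = c := by
        rw [Eswap q' hq'c (q * q'), mul_assoc, hq'i, hswap]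
      calc τ (p * (p' * q' * q * (q' * p')))
          = τ ((p * (p' * (q' * (q * q')))) * p') := by simp only [mul_assoc]
        _ = τ (p' * (p * (p' * (q' * (q * q'))))) := htr _ _
        _ = τ ((p' * p * p') * (q' * (q * q'))) := by simp only [mul_assoc]
        _ = τ ((p' * p * p') * c) := by
            rw [key _ (mul_mem (mul_mem hp' hp) hp') _
              (mul_mem hq' (mul_mem hq hq')), hx]
        _ = τ ((p' * p * c) * p') := by
            rw [mul_assoc (p' * p), hcp', ← mul_assoc]
        _ = τ (p' * (p' * p * c)) := htr _ _
        _ = τ ((p' * p') * (p * c)) := by simp only [mul_assoc]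
        _ = τ (p' * p * c) := by rw [hp'i]; simp only [mul_assoc]
  -- cross terms vanish
  have cross : ∀ p' q' p'' q'', p' ∈ Pm → p'' ∈ Pm → q' ∈ Q0 → q'' ∈ Q0 →
      (∀ y ∈ Qm, p' * y = y * p') → p' * p'' = 0 →
      τ (p * (p' * q' * q * (q'' * p''))) = 0 := by
    intro p' q' p'' q'' hp' hp'' hq' hq'' hp'c h0
    have hc : EQm (q' * (q * q'')) ∈ Qm := hEQm_mem _
    set c := EQm (q' * (q * q'')) with hcdef
    have hcp' : p' * c = c * p' := hp'c _ hc
    calc τ (p * (p' * q' * q * (q'' * p'')))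
        = τ ((p * (p' * (q' * (q * q'')))) * p'') := by simp only [mul_assoc]
      _ = τ (p'' * (p * (p' * (q' * (q * q''))))) := htr _ _
      _ = τ ((p'' * p * p') * (q' * (q * q''))) := by simp only [mul_assoc]
      _ = τ ((p'' * p * p') * c) :=
          key _ (mul_mem (mul_mem hp'' hp) hp') _
            (mul_mem hq' (mul_mem hq hq''))
      _ = τ ((p'' * p * c) * p') := by rw [mul_assoc (p'' * p), hcp', ← mul_assoc]
      _ = τ (p' * (p'' * p * c)) := htr _ _
      _ = τ ((p' * p'') * (p * c)) := by simp only [mul_assoc]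
      _ = 0 := by rw [h0, zero_mul, map_zero]
  obtain ⟨L1, L3, L5⟩ := main p₁ q₁ hp₁P hq₁Q hp₁c hq₁c hp₁ hq₁
  obtain ⟨L2, L4, L8⟩ := main p₂ q₂ hp₂P hq₂Q hp₂c hq₂c hp₂ hq₂
  have L6 := cross p₁ q₁ p₂ q₂ hp₁P hp₂P hq₁Q hq₂Q hp₁c hporth
  have L7 := cross p₂ q₂ p₁ q₁ hp₂P hp₁P hq₂Q hq₁Q hp₂c hporth2
  have L0 : τ (p * q) = 0 := by
    rw [key p hp q hq]; exact zero1 q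
  set α := lam - 1 with hα
  set β := (starRingEnd ℂ) lam - 1 with hβ
  have hUstar : (1 + α • (p₁ * q₁) + β • (p₂ * q₂))ᴴ
      = 1 + β • (q₁ * p₁) + α • (q₂ * p₂) := by
    simp [conjTranspose_add, conjTranspose_smul, conjTranspose_mul, conjTranspose_one,
      hp₁s, hq₁s, hp₂s, hq₂s, hα, hβ, star_sub, Complex.star_def, Complex.conj_conj]
  rw [hUstar]
  have expand : τ (p * ((1 + α • (p₁ * q₁) + β • (p₂ * q₂)) * q *
      (1 + β • (q₁ * p₁) + α • (q₂ * p₂)))) =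
      τ (p * q) + α * τ (p * (p₁ * q₁ * q)) + β * τ (p * (p₂ * q₂ * q))
      + β * τ (p * (q * (q₁ * p₁))) + α * τ (p * (q * (q₂ * p₂)))
      + (α * β) * τ (p * (p₁ * q₁ * q * (q₁ * p₁)))
      + (α * α) * τ (p * (p₁ * q₁ * q * (q₂ * p₂)))
      + (β * β) * τ (p * (p₂ * q₂ * q * (q₁ * p₁)))
      + (β * α) * τ (p * (p₂ * q₂ * q * (q₂ * p₂))) := by
    simp only [add_mul, mul_add, smul_mul_assoc, mul_smul_comm, smul_add, smul_smul,
      map_add, _root_.map_smul, smul_eq_mul, one_mul, mul_one, mul_assoc]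
    ring
  rw [expand, L0, L1, L2, L3, L4, L5, L6, L7, L8]
  have h1 : lam * (starRingEnd ℂ) lam = 1 := by
    rw [Complex.mul_conj, Complex.normSq_eq_norm_sq, hlam]
    norm_num
  have hαβ : α + β + α * β = 0 := by
    rw [hα, hβ]; linear_combination h1
  linear_combination (τ (p₁ * p * EQm (q₁ * q)) + τ (p₂ * p * EQm (q₂ * q))) * hαβ
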